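/- For m ∈ (0,1), the quadratic equation ρ²(m+2) + ρ(2m² - 2m - 6) + 2m² + m = 0 has two distinct real positive roots, given by ρ = (-m² + m + 3 ± √((m²-1)(m²-4m-9)))/(m+2). -/

import Mathlib

/-- For `m ∈ (0,1)`, the quadratic `ρ²(m+2) + ρ(2m² - 2m - 6) + 2m² + m = 0` has two
distinct real positive roots, given by
`ρ = (-m² + m + 3 ± √((m²-1)(m²-4m-9)))/(m+2)`. -/
theorem kite_quadratic_roots (m : ℝ) (hm0 : 0 < m) (hm1 : m < 1) :
    let d := (m ^ 2 - 1) * (m ^ 2 - 4 * m - 9)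
    let ρp := (-m ^ 2 + m + 3 + Real.sqrt d) / (m + 2)
    let ρm := (-m ^ 2 + m + 3 - Real.sqrt d) / (m + 2)
    ρp ≠ ρm ∧ 0 < ρp ∧ 0 < ρm ∧
      ρp ^ 2 * (m + 2) + ρp * (2 * m ^ 2 - 2 * m - 6) + 2 * m ^ 2 + m = 0 ∧
      ρm ^ 2 * (m + 2) + ρm * (2 * m ^ 2 - 2 * m - 6) + 2 * m ^ 2 + m = 0 ∧
      ∀ ρ : ℝ, ρ ^ 2 * (m + 2) + ρ * (2 * m ^ 2 - 2 * m - 6) + 2 * m ^ 2 + m = 0 →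
        ρ = ρp ∨ ρ = ρm := by
  intro d ρp ρm
  have hd : 0 < d := by
    have h1 : m ^ 2 - 1 < 0 := by nlinarith
    have h2 : m ^ 2 - 4 * m - 9 < 0 := by nlinarith
    exact mul_pos_of_neg_of_neg h1 h2
  set s := Real.sqrt d with hs
  have hs2 : s ^ 2 = d := Real.sq_sqrt hd.le
  have hs0 : 0 < s := Real.sqrt_pos.mpr hd
  have h2 : (0:ℝ) < m + 2 := by linarith
  have h2' : m + 2 ≠ 0 := ne_of_gt h2
  have hnum : 0 < -m ^ 2 + m + 3 := by nlinarith
  have hlt : s < -m ^ 2 + m + 3 := by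
    have hs2' : s ^ 2 = (m ^ 2 - 1) * (m ^ 2 - 4 * m - 9) := hs2
    have hsq : s ^ 2 < (-m ^ 2 + m + 3) ^ 2 := by nlinarith [hs2']
    exact lt_of_pow_lt_pow_left₀ 2 hnum.le hsq
  refine ⟨?_, ?_, ?_, ?_, ?_, ?_⟩
  · intro h
    have : (-m ^ 2 + m + 3 + s) = (-m ^ 2 + m + 3 - s) := by
      have h' : (-m ^ 2 + m + 3 + s) / (m + 2) = (-m ^ 2 + m + 3 - s) / (m + 2) := h
      rw [div_left_inj' h2'] at h'; linarith
    linarith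
  · exact div_pos (by linarith) h2
  · exact div_pos (by linarith) h2
  · show ((-m ^ 2 + m + 3 + s) / (m + 2)) ^ 2 * (m + 2) +
      ((-m ^ 2 + m + 3 + s) / (m + 2)) * (2 * m ^ 2 - 2 * m - 6) + 2 * m ^ 2 + m = 0
    field_simp
    linear_combination hs2
  · show ((-m ^ 2 + m + 3 - s) / (m + 2)) ^ 2 * (m + 2) +
      ((-m ^ 2 + m + 3 - s) / (m + 2)) * (2 * m ^ 2 - 2 * m - 6) + 2 * m ^ 2 + m = 0
    field_simp
    linear_combination hs2
  · intro ρ hρ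
    have key : ((m + 2) * ρ - (-m ^ 2 + m + 3) - s) * ((m + 2) * ρ - (-m ^ 2 + m + 3) + s) = 0 := by
      have : s ^ 2 = (m ^ 2 - 1) * (m ^ 2 - 4 * m - 9) := hs2
      nlinarith [hρ, this]
    rcases mul_eq_zero.mp key with h | h
    · left
      show ρ = (-m ^ 2 + m + 3 + s) / (m + 2)
      field_simp; linarith
    · right
      show ρ = (-m ^ 2 + m + 3 - s) / (m + 2)
      field_simp; linarith
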